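/- arXiv:2107.14537 — 5 statements merged into one kernel-verified Lean document; each statement's English description precedes it below -/
import Mathlib

section
/- Let k be an algebraically closed field of characteristic 2 and let F = y⁶ + x⁵y + x²z⁴ ∈ k[x,y,z]. The identity F(s⁶, s²t⁴, t⁶ + s⁵t) = 0 holds in k[s,t], the triple (s⁶, s²t⁴, t⁶+s⁵t) is nonzero whenever (s,t) ≠ (0,0), and the induced map ℙ¹(k) → ℙ²(k), (s:t) ↦ (s⁶ : s²t⁴ : t⁶+s⁵t), is a bijection from ℙ¹(k) onto the zero locus {(x:y:z) ∈ ℙ²(k) : F(x,y,z) = 0}. In particular the sextic F = 0 is a rational curve. -/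
open MvPolynomial

lemma pow4_inj {k : Type*} [Field k] [CharP k 2] {a b : k} (h : a ^ 4 = b ^ 4) :
    a = b := by
  haveI : Fact (Nat.Prime 2) := ⟨Nat.prime_two⟩
  have h4 : (a - b) ^ 2 ^ 2 = a ^ 2 ^ 2 - b ^ 2 ^ 2 := sub_pow_char_pow a b 2
  have : (a - b) ^ 4 = 0 := by
    norm_num at h4
    rw [h4, h, sub_self]
  have := pow_eq_zero_iff (n := 4) (by norm_num) |>.mp this
  exact sub_eq_zero.mp this

/-- `F(s⁶, s²t⁴, t⁶+s⁵t) = 0` identically, the parametrizing triple is nonzero for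
`(s,t) ≠ (0,0)`, and `(s:t) ↦ (s⁶ : s²t⁴ : t⁶+s⁵t)` is a bijection of `ℙ¹(k)` onto
the zero locus of `F = y⁶ + x⁵y + x²z⁴` in `ℙ²(k)`; so the sextic is rational. -/
theorem stmt_2 (k : Type*) [Field k] [IsAlgClosed k] [CharP k 2]
    (F : MvPolynomial (Fin 3) k)
    (hF : F = X 1 ^ 6 + X 0 ^ 5 * X 1 + X 0 ^ 2 * X 2 ^ 4) :
    (aeval (![X 0 ^ 6, X 0 ^ 2 * X 1 ^ 4, X 1 ^ 6 + X 0 ^ 5 * X 1] :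
        Fin 3 → MvPolynomial (Fin 2) k) F = 0) ∧
    (∀ s t : k, (s, t) ≠ (0, 0) →
      (s ^ 6, s ^ 2 * t ^ 4, t ^ 6 + s ^ 5 * t) ≠ ((0 : k), (0 : k), (0 : k))) ∧
    (∀ x y z : k, (x, y, z) ≠ (0, 0, 0) → eval ![x, y, z] F = 0 →
      ∃ s t c : k, (s, t) ≠ (0, 0) ∧ c ≠ 0 ∧
        x = c * s ^ 6 ∧ y = c * (s ^ 2 * t ^ 4) ∧ z = c * (t ^ 6 + s ^ 5 * t)) ∧
    (∀ s t s' t' : k, (s, t) ≠ (0, 0) → (s', t') ≠ (0, 0) →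
      (∃ c : k, c ≠ 0 ∧ s' ^ 6 = c * s ^ 6 ∧ s' ^ 2 * t' ^ 4 = c * (s ^ 2 * t ^ 4) ∧
        t' ^ 6 + s' ^ 5 * t' = c * (t ^ 6 + s ^ 5 * t)) →
      ∃ d : k, d ≠ 0 ∧ s' = d * s ∧ t' = d * t) := by
  have h2k : (2 : k) = 0 := CharTwo.two_eq_zero
  refine ⟨?_, ?_, ?_, ?_⟩
  · have h2 : (2 : MvPolynomial (Fin 2) k) = 0 := by
      exact_mod_cast CharP.cast_eq_zero (MvPolynomial (Fin 2) k) 2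
    simp only [hF, map_add, map_mul, map_pow, aeval_X, Matrix.cons_val_zero,
      Matrix.cons_val_one, Matrix.head_cons, Matrix.cons_val_two, Matrix.tail_cons]
    linear_combination (X 0 ^ 12 * X 1 ^ 24 + X 0 ^ 32 * X 1 ^ 4 +
      2 * X 0 ^ 17 * X 1 ^ 19 + 3 * X 0 ^ 22 * X 1 ^ 14 + 2 * X 0 ^ 27 * X 1 ^ 9) * h2
  · intro s t h hc
    simp only [Prod.mk.injEq] at hc
    obtain ⟨h1, h2', h3⟩ := hc
    have hs : s = 0 := by
      have := pow_eq_zero_iff (n := 6) (by norm_num) |>.mp h1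
      exact this
    subst hs
    have ht : t = 0 := by
      have : t ^ 6 = 0 := by linear_combination h3 - t * (by ring_nf : (0:k) ^ 5 = 0)
      exact pow_eq_zero_iff (n := 6) (by norm_num) |>.mp this
    exact h (by simp [ht])
  · intro x y z hne heval
    simp only [hF, map_add, map_mul, map_pow, eval_X, Matrix.cons_val_zero,
      Matrix.cons_val_one, Matrix.head_cons, Matrix.cons_val_two, Matrix.tail_cons] at heval
    by_cases hx : x = 0
    · subst hx
      have hy : y = 0 := by
        have : y ^ 6 = 0 := by linear_combination heval
        exact pow_eq_zero_iff (n := 6) (by norm_num) |>.mp this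
      subst hy
      have hz : z ≠ 0 := by
        intro hz; exact hne (by simp [hz])
      exact ⟨0, 1, z, by simp, hz, by ring, by ring, by ring⟩
    · obtain ⟨t, ht⟩ := IsAlgClosed.exists_pow_nat_eq (y / x) (by norm_num : 0 < 4)
      have hty : t ^ 4 * x = y := by
        field_simp at ht
        linear_combination ht
      refine ⟨1, t, x, by simp, hx, by ring, by rw [← hty]; ring, ?_⟩
      apply pow4_inj
      apply mul_left_cancel₀ (pow_ne_zero 2 hx)
      subst hty
      linear_combination heval - (x ^ 6 * (t ^ 24 + t ^ 4 + 2 * t ^ 19 + 3 * t ^ 14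
        + 2 * t ^ 9)) * h2k
  · rintro s t s' t' hst hst' ⟨c, hc, h1, h2, h3⟩
    by_cases hs : s = 0
    · subst hs
      have hs' : s' = 0 := by
        have : s' ^ 6 = 0 := by rw [h1]; ring
        exact pow_eq_zero_iff (n := 6) (by norm_num) |>.mp this
      subst hs'
      have ht : t ≠ 0 := fun h => hst (by simp [h])
      have ht' : t' ≠ 0 := fun h => hst' (by simp [h])
      exact ⟨t' / t, div_ne_zero ht' ht, by ring, by field_simp⟩
    · have hs' : s' ≠ 0 := by
        intro h
        apply hc
        have : c * s ^ 6 = 0 := by rw [← h1, h]; ring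
        rcases mul_eq_zero.mp this with h' | h'
        · exact h'
        · exact (hs (pow_eq_zero_iff (n := 6) (by norm_num) |>.mp h')).elim
      refine ⟨s' / s, div_ne_zero hs' hs, by field_simp, ?_⟩
      have key : s ^ 2 * s' ^ 2 * (s ^ 4 * t' ^ 4) = s ^ 2 * s' ^ 2 * (s' ^ 4 * t ^ 4) := by
        linear_combination s ^ 6 * h2 - s ^ 2 * t ^ 4 * h1
      have key2 : (s * t') ^ 4 = (s' * t) ^ 4 := by
        have := mul_left_cancel₀ (mul_ne_zero (pow_ne_zero 2 hs) (pow_ne_zero 2 hs')) key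
        linear_combination this
      have := pow4_inj key2
      field_simp
      linear_combination this
end

section
/- Let k be a field of characteristic 2, and let Q₁ = y² + z² + xy + yz + zx and Q₂ = x² + z² + xy + yz + zx in k[x,y,z]. A nonzero triple (x,y,z) ∈ k³ satisfies Q₁(x,y,z) = 0 and Q₂(x,y,z) = 0 if and only if x = y and z = 0. That is, the two conics Q₁ = 0 and Q₂ = 0 meet in ℙ²(k) only at the single point (1:1:0). -/
/-- In characteristic 2 the conics `Q₁ : y²+z²+xy+yz+zx = 0` and
`Q₂ : x²+z²+xy+yz+zx = 0` meet in `ℙ²` only at `(1:1:0)`: for a nonzero triple,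
both vanish iff `x = y` and `z = 0`. -/
theorem stmt_7 (k : Type*) [Field k] [CharP k 2] :
    ∀ x y z : k, (x, y, z) ≠ (0, 0, 0) →
      ((y ^ 2 + z ^ 2 + x * y + y * z + z * x = 0 ∧
        x ^ 2 + z ^ 2 + x * y + y * z + z * x = 0) ↔ (x = y ∧ z = 0)) := by
  intro x y z _
  have h2 : (2 : k) = 0 := by exact_mod_cast CharP.cast_eq_zero k 2
  constructor
  · rintro ⟨h1, hq⟩
    have hxy : x = y := by
      have hsq : (x - y) ^ 2 = 0 := by linear_combination hq - h1 + (y ^ 2 - x * y) * h2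
      exact sub_eq_zero.mp (pow_eq_zero_iff (n := 2) (by norm_num) |>.mp hsq)
    subst hxy
    have hz : z ^ 2 = 0 := by linear_combination h1 - (x ^ 2 + x * z) * h2
    exact ⟨rfl, pow_eq_zero_iff (n := 2) (by norm_num) |>.mp hz⟩
  · rintro ⟨rfl, rfl⟩
    constructor <;> linear_combination x ^ 2 * h2
end

section
/- Let k be a field of characteristic 2 and let a, b ∈ k satisfy b² = a. Let φ be the k-algebra substitution of k[x,y,z] determined by x ↦ x, y ↦ b·x + y, z ↦ a·x + z, and set G = y² + xz and H = x⁶ + G²·(x + a·z)·z. Then φ is an involution, φ(G) = G, φ(x²G²) = x²G², and φ(H) = H + a(1 + a²)·x²G². Consequently φ sends every member s·x²G² + t·H of the pencil of sextics spanned by x²G² and H to a member of the same pencil. -/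
open MvPolynomial

/-- Let `b² = a` in characteristic 2. The substitution
`φ : x ↦ x, y ↦ bx + y, z ↦ ax + z` is an involution with `φ(G) = G` for
`G = y² + xz`, `φ(x²G²) = x²G²`, and `φ(H) = H + a(1+a²)x²G²` for
`H = x⁶ + G²(x+az)z`; hence `φ` maps each member of the pencil spanned by
`x²G²` and `H` to a member of the same pencil. -/
theorem stmt_11 (k : Type*) [Field k] [CharP k 2]
    (a b : k) (hab : b ^ 2 = a)
    (φ : MvPolynomial (Fin 3) k →ₐ[k] MvPolynomial (Fin 3) k)
    (hφ : φ = aeval ![X 0, C b * X 0 + X 1, C a * X 0 + X 2])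
    (G H : MvPolynomial (Fin 3) k)
    (hG : G = X 1 ^ 2 + X 0 * X 2)
    (hH : H = X 0 ^ 6 + G ^ 2 * (X 0 + C a * X 2) * X 2) :
    (∀ p, φ (φ p) = p) ∧
    φ G = G ∧
    φ (X 0 ^ 2 * G ^ 2) = X 0 ^ 2 * G ^ 2 ∧
    φ H = H + C (a * (1 + a ^ 2)) * (X 0 ^ 2 * G ^ 2) ∧
    (∀ s t : k, ∃ s' t' : k, φ (C s * (X 0 ^ 2 * G ^ 2) + C t * H) =
      C s' * (X 0 ^ 2 * G ^ 2) + C t' * H) := by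
  have h2 : (2 : MvPolynomial (Fin 3) k) = 0 := by
    have := CharP.cast_eq_zero (MvPolynomial (Fin 3) k) 2
    simpa using this
  have hab' : (C b : MvPolynomial (Fin 3) k) ^ 2 = C a := by
    rw [← map_pow, hab]
  have hx0 : φ (X 0) = X 0 := by simp [hφ]
  have hx1 : φ (X 1) = C b * X 0 + X 1 := by simp [hφ]
  have hx2 : φ (X 2) = C a * X 0 + X 2 := by simp [hφ]
  have hc : ∀ c : k, φ (C c) = C c := by intro c; simp [hφ]
  have hinv : ∀ p, φ (φ p) = p := by
    intro p
    have : φ.comp φ = AlgHom.id k (MvPolynomial (Fin 3) k) := by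
      apply MvPolynomial.algHom_ext
      intro i
      fin_cases i
      · simp [hx0]
      · show φ (φ (X 1)) = X 1
        rw [hx1, map_add, map_mul, hx0, hx1, hc]
        linear_combination (C b * X 0) * h2
      · show φ (φ (X 2)) = X 2
        rw [hx2, map_add, map_mul, hx0, hx2, hc]
        linear_combination (C a * X 0) * h2
    calc φ (φ p) = (φ.comp φ) p := rfl
    _ = p := by rw [this]; rfl
  have hφG : φ G = G := by
    rw [hG, map_add, map_pow, map_mul, hx0, hx1, hx2]
    linear_combination (X 0 ^ 2) * hab' + (C a * X 0 ^ 2 + C b * X 0 * X 1) * h2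
  have hφx2G2 : φ (X 0 ^ 2 * G ^ 2) = X 0 ^ 2 * G ^ 2 := by
    rw [map_mul, map_pow, map_pow, hx0, hφG]
  have hφH : φ H = H + C (a * (1 + a ^ 2)) * (X 0 ^ 2 * G ^ 2) := by
    rw [hH, map_add, map_pow, map_mul, map_mul, map_pow, map_add, map_mul,
      hx0, hx2, hφG, hc]
    simp only [map_mul, map_add, map_one, map_pow]
    linear_combination (C a ^ 2 * X 0 * X 2 * G ^ 2) * h2
  refine ⟨hinv, hφG, hφx2G2, hφH, ?_⟩
  intro s t
  refine ⟨s + t * (a * (1 + a ^ 2)), t, ?_⟩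
  simp only [map_add, map_mul, map_pow, hc, hx0, hφG, hφH]
  ring
end

section
/- Let k be a field of characteristic 2 and let a ∈ k with a ≠ 0. Let F = x⁶ + (y² + xz)²·(a·x + z)·z ∈ k[x,y,z]. A nonzero triple (x,y,z) ∈ k³ satisfies F(x,y,z) = 0 and (∂F/∂x)(x,y,z) = (∂F/∂y)(x,y,z) = (∂F/∂z)(x,y,z) = 0 if and only if either (x = y = 0) or (x = z = 0). That is, the sextic curve F = 0 in ℙ²(k) has exactly two singular points, namely (0:0:1) and (0:1:0). -/
open MvPolynomial

/-- In characteristic 2, for `a ≠ 0`, the sextic `F = x⁶ + (y²+xz)²(ax+z)z` and all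
its partial derivatives vanish at a nonzero triple `(x,y,z)` iff `x = y = 0` or
`x = z = 0`; i.e. the curve `F = 0` has exactly the two singular points
`(0:0:1)` and `(0:1:0)`. -/
theorem stmt_12 (k : Type*) [Field k] [CharP k 2]
    (a : k) (ha : a ≠ 0)
    (F : MvPolynomial (Fin 3) k)
    (hF : F = X 0 ^ 6 + (X 1 ^ 2 + X 0 * X 2) ^ 2 * (C a * X 0 + X 2) * X 2) :
    ∀ x y z : k, (x, y, z) ≠ (0, 0, 0) →
      ((eval ![x, y, z] F = 0 ∧ ∀ i : Fin 3, eval ![x, y, z] (pderiv i F) = 0)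
        ↔ ((x = 0 ∧ y = 0) ∨ (x = 0 ∧ z = 0))) := by
  intro x y z hxyz
  subst hF
  have h2 : (2:k) = 0 := by exact_mod_cast CharP.cast_eq_zero k 2
  constructor
  · rintro ⟨h0, hd⟩
    have hdx := hd 0
    have hdz := hd 2
    simp [pderiv_mul, pderiv_pow] at h0 hdx hdz
    have hx' : a * z * (y ^ 2 + x * z) ^ 2 = 0 := by
      linear_combination hdx - (3 * x ^ 5 + z ^ 2 * (a * x + z) * (y ^ 2 + x * z)) * h2
    have hz' : a * x * (y ^ 2 + x * z) ^ 2 = 0 := by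
      linear_combination hdz - (z * (y ^ 2 + x * z) ^ 2 + x * z * (a * x + z) * (y ^ 2 + x * z)) * h2
    by_cases hw : y ^ 2 + x * z = 0
    · left
      rw [hw] at h0
      have hx0 : x = 0 := by
        have : x ^ 6 = 0 := by linear_combination h0
        exact pow_eq_zero_iff (by norm_num) |>.mp this
      refine ⟨hx0, ?_⟩
      rw [hx0] at hw
      have : y ^ 2 = 0 := by linear_combination hw
      exact pow_eq_zero_iff (by norm_num) |>.mp this
    · right
      have hw2 : (y ^ 2 + x * z) ^ 2 ≠ 0 := pow_ne_zero _ hw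
      constructor
      · rcases mul_eq_zero.mp hz' with h | h
        · rcases mul_eq_zero.mp h with h | h
          · exact absurd h ha
          · exact h
        · exact absurd h hw2
      · rcases mul_eq_zero.mp hx' with h | h
        · rcases mul_eq_zero.mp h with h | h
          · exact absurd h ha
          · exact h
        · exact absurd h hw2
  · rintro (⟨hx, hy⟩ | ⟨hx, hz⟩) <;> subst hx <;>
      first
      | (subst hy
         refine ⟨by simp, fun i => ?_⟩
         fin_cases i <;> simp [pderiv_mul, pderiv_pow])
      | (subst hz
         refine ⟨by simp, fun i => ?_⟩
         fin_cases i <;> simp [pderiv_mul, pderiv_pow])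
end

section
/- Let k be a field of characteristic 2 and let a ∈ k. With G = y² + xz and F = x⁶ + G²·(a·x + z)·z in k[x,y,z], a nonzero triple (x,y,z) ∈ k³ satisfies G(x,y,z) = 0 and F(x,y,z) = 0 if and only if x = y = 0. That is, the conic G = 0 meets the sextic F = 0 in ℙ²(k) only at the single point (0:0:1). -/
/-- In characteristic 2 the conic `G : y² + xz = 0` meets the sextic
`F : x⁶ + (y²+xz)²(ax+z)z = 0` in `ℙ²` only at `(0:0:1)`: for a nonzero triple,
both vanish iff `x = y = 0`. -/
theorem stmt_13 (k : Type*) [Field k] [CharP k 2] (a : k) :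
    ∀ x y z : k, (x, y, z) ≠ (0, 0, 0) →
      ((y ^ 2 + x * z = 0 ∧
        x ^ 6 + (y ^ 2 + x * z) ^ 2 * (a * x + z) * z = 0) ↔ (x = 0 ∧ y = 0)) := by
  intro x y z _
  constructor
  · rintro ⟨h1, h2⟩
    rw [h1] at h2
    have hx : x = 0 := by
      have h6 : x ^ 6 = 0 := by linear_combination h2
      exact pow_eq_zero_iff (n := 6) (by norm_num) |>.mp h6
    refine ⟨hx, ?_⟩
    rw [hx, zero_mul, add_zero] at h1
    exact pow_eq_zero_iff (n := 2) (by norm_num) |>.mp h1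
  · rintro ⟨hx, hy⟩
    subst hx hy
    constructor <;> ring
end
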